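/- Let μ be a regular uncountable cardinal and X a set with |X| ≥ μ. A set C ⊆ [X]^{<μ} contains a club subset of [X]^{<μ} if and only if there exists a function f : [X]^{<ω} → [X]^{<μ} such that every x ∈ [X]^{<μ} that is closed under f belongs to C. -/

import Mathlib

set_option maxHeartbeats 1000000


open Cardinal Set

universe u

/-- `C` is club in `[X]^{<μ}`: every element has size `< μ`, every set of size `< μ`
is contained in an element of `C`, and `C` is closed under unions of ⊆-increasing
chains of length `< μ` (indexed by a nonzero ordinal of cardinality `< μ`). -/
def IsClubSet {X : Type u} (μ : Cardinal.{u}) (C : Set (Set X)) : Prop :=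
  (∀ c ∈ C, #c < μ) ∧
  (∀ y : Set X, #y < μ → ∃ c ∈ C, y ⊆ c) ∧
  (∀ (δ : Ordinal.{u}) (c : Ordinal.{u} → Set X), δ ≠ 0 → δ.card < μ →
    (∀ β < δ, c β ∈ C) → (∀ β γ, β ≤ γ → γ < δ → c β ⊆ c γ) →
    (⋃ β ∈ Set.Iio δ, c β) ∈ C)

/-- `x` is closed under `f : [X]^{<ω} → [X]^{<μ}`: for every finite `s ⊆ x`, `f s ⊆ x`. -/
def ClosedUnderF {X : Type u} (f : Finset X → Set X) (x : Set X) : Prop :=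
  ∀ s : Finset X, ↑s ⊆ x → f s ⊆ x

section MenasHelpers

variable {X : Type u} {μ : Cardinal.{u}}

private lemma menas_small_iUnion (hreg : μ.IsRegular) {ι : Type u} (g : ι → Set X)
    (hι : #ι < μ) (hg : ∀ i, #(g i) < μ) : #(⋃ i, g i) < μ :=
  lt_of_le_of_lt (Cardinal.mk_iUnion_le g)
    (Cardinal.mul_lt_of_lt hreg.aleph0_le hι (Cardinal.iSup_lt_of_isRegular hreg hι hg))

private lemma menas_small_biUnion (hreg : μ.IsRegular) {ι : Type u} {t : Set ι} (g : ι → Set X)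
    (ht : #t < μ) (hg : ∀ i ∈ t, #(g i) < μ) : #(⋃ i ∈ t, g i) < μ := by
  rw [Set.biUnion_eq_iUnion]
  exact menas_small_iUnion hreg _ ht fun i => hg i i.2

private lemma menas_mk_finsetSubtype_lt (hunc : ℵ₀ < μ) {x : Set X} (hx : #x < μ) :
    #{s : Finset X // ↑s ⊆ x} < μ := by
  classical
  have hinj : Function.Injective (fun s : {s : Finset X // ↑s ⊆ x} =>
      (s.1.subtype (· ∈ x) : Finset x)) := by
    rintro ⟨s, hs⟩ ⟨t, ht⟩ h
    have hs' : s.filter (· ∈ x) = s := Finset.filter_true_of_mem fun a ha => hs ha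
    have ht' : t.filter (· ∈ x) = t := Finset.filter_true_of_mem fun a ha => ht ha
    have := congrArg (fun u : Finset x => u.map (Function.Embedding.subtype _)) h
    simp only [Finset.subtype_map, hs', ht'] at this
    exact Subtype.ext this
  have hle : #{s : Finset X // ↑s ⊆ x} ≤ #(Finset ↥x) := Cardinal.mk_le_of_injective hinj
  rcases finite_or_infinite ↥x with hfin | hinf
  · exact hle.trans_lt (lt_of_le_of_lt Cardinal.mk_le_aleph0 hunc)
  · rw [Cardinal.mk_finset_of_infinite] at hle
    exact hle.trans_lt hx


private lemma menas_union_finsets_mem (hreg : μ.IsRegular)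
    {D : Set (Set X)}
    (hD3 : ∀ (δ : Ordinal.{u}) (c : Ordinal.{u} → Set X), δ ≠ 0 → δ.card < μ →
      (∀ β < δ, c β ∈ D) → (∀ β γ, β ≤ γ → γ < δ → c β ⊆ c γ) →
      (⋃ β ∈ Set.Iio δ, c β) ∈ D)
    (F : Finset X → Set X) (hmono : ∀ s t : Finset X, s ⊆ t → F s ⊆ F t)
    (y : Set X) (hy : #y < μ) (hFD : ∀ s : Finset X, ↑s ⊆ y → F s ∈ D) :
    (⋃ s ∈ {s : Finset X | ↑s ⊆ y}, F s) ∈ D := by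
  classical
  suffices H : ∀ κ : Cardinal.{u}, κ < μ → ∀ y : Set X, #y ≤ κ →
      (∀ s : Finset X, ↑s ⊆ y → F s ∈ D) →
      (⋃ s ∈ {s : Finset X | ↑s ⊆ y}, F s) ∈ D from H #y hy y le_rfl hFD
  intro κ
  induction κ using WellFoundedLT.induction with
  | _ κ IH =>
  intro hκ y hyκ hFD
  by_cases hfin : y.Finite
  · have hsub : (↑hfin.toFinset : Set X) ⊆ y := by simp
    have heq : (⋃ s ∈ {s : Finset X | ↑s ⊆ y}, F s) = F hfin.toFinset := by
      apply subset_antisymm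
      · refine iUnion₂_subset fun s hs => hmono _ _ fun a ha => ?_
        exact hfin.mem_toFinset.2 (hs ha)
      · exact Set.subset_biUnion_of_mem (u := fun s => F s) hsub
    rw [heq]; exact hFD _ hsub
  · have hinf : Infinite ↥y := Set.infinite_coe_iff.2 hfin
    have hℵ : ℵ₀ ≤ #y := Cardinal.infinite_iff.1 hinf
    obtain ⟨r, wo, hr⟩ := Cardinal.ord_eq ↥y
    set δ : Ordinal.{u} := (#y).ord with hδ
    have hδcard : δ.card = #y := Cardinal.card_ord _
    have hδlim : Order.IsSuccLimit δ := Cardinal.isSuccLimit_ord hℵ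
    set Y : Ordinal.{u} → Set X := fun β => {a : X | ∃ h : a ∈ y, Ordinal.typein r ⟨a, h⟩ < β}
      with hY
    have hYsub : ∀ β, Y β ⊆ y := fun β a ha => ha.1
    have hYmono : ∀ β γ, β ≤ γ → Y β ⊆ Y γ := fun β γ hβγ a ⟨h, hlt⟩ => ⟨h, hlt.trans_le hβγ⟩
    set c : Ordinal.{u} → Set X := fun β => ⋃ s ∈ {s : Finset X | ↑s ⊆ Y β}, F s with hc
    have hcmem : ∀ β < δ, c β ∈ D := by
      intro β hβ
      obtain ⟨a, ha⟩ := Ordinal.typein_surj r (by rwa [← hr])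
      have hYcard0 : #(Y β) ≤ #{b : ↥y // r b a} := by
        refine Cardinal.mk_le_of_injective (f := fun x : Y β =>
          (⟨⟨x.1, x.2.choose⟩, by
            rw [← Ordinal.typein_lt_typein r, ha]; exact x.2.choose_spec⟩ :
            {b : ↥y // r b a})) ?_
        rintro ⟨x1, hx1⟩ ⟨x2, hx2⟩ h
        simpa [Subtype.ext_iff] using h
      have hYcard : #(Y β) ≤ β.card :=
        hYcard0.trans (le_of_eq (by rw [← ha]; exact (Ordinal.card_typein a).symm))
      have hβκ : β.card < κ := lt_of_lt_of_le (Cardinal.lt_ord.1 hβ) hyκ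
      exact IH β.card hβκ (hβκ.trans hκ) (Y β) hYcard
        fun s hs => hFD s (hs.trans (hYsub β))
    have hcmono : ∀ β γ, β ≤ γ → γ < δ → c β ⊆ c γ := by
      intro β γ hβγ _
      exact iUnion₂_subset fun s hs =>
        Set.subset_biUnion_of_mem (u := fun s => F s) (hs.trans (hYmono β γ hβγ))
    have hmem := hD3 δ c hδlim.ne_bot (by rw [hδcard]; exact lt_of_le_of_lt hyκ hκ) hcmem hcmono
    have heq : (⋃ β ∈ Set.Iio δ, c β) = ⋃ s ∈ {s : Finset X | ↑s ⊆ y}, F s := by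
      apply subset_antisymm
      · refine iUnion₂_subset fun β _ => iUnion₂_subset fun s hs =>
          Set.subset_biUnion_of_mem (u := fun s => F s) (hs.trans (hYsub β))
      · refine iUnion₂_subset fun s hs => ?_
        set ρ : X → Ordinal.{u} := fun a =>
          if h : a ∈ y then Ordinal.typein r ⟨a, h⟩ + 1 else 0 with hρ
        have hρlt : ∀ a ∈ s, ρ a < δ := by
          intro a ha
          rw [hρ]; simp only [dif_pos (hs ha)]
          rw [Ordinal.add_one_eq_succ]
          refine hδlim.succ_lt ?_
          have h := Ordinal.typein_lt_type r ⟨a, hs ha⟩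
          rw [← hr] at h; exact h
        have hβδ : s.sup ρ < δ := by
          rw [Finset.sup_lt_iff (pos_iff_ne_zero.2 hδlim.ne_bot)]
          exact hρlt
        have hsY : ↑s ⊆ Y (s.sup ρ) := by
          intro a ha
          refine ⟨hs ha, ?_⟩
          have h1 : Ordinal.typein r ⟨a, hs ha⟩ < ρ a := by
            rw [hρ]; simp only [dif_pos (hs ha)]
            rw [Ordinal.add_one_eq_succ]
            exact Order.lt_succ _
          exact lt_of_lt_of_le h1 (Finset.le_sup ha)
        exact (Set.subset_biUnion_of_mem (u := fun s => F s) hsY).trans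
          (Set.subset_biUnion_of_mem (u := fun β => c β) (Set.mem_Iio.2 hβδ))
    rwa [heq] at hmem

private noncomputable def iterClose {X : Type u} (g : Set X → Set X) : ℕ → Finset X → Set X
  | 0, s => g ↑s
  | n+1, s => g (⋃ t ∈ (s.powerset : Finset (Finset X)), iterClose g n t)

private noncomputable def closeSeq {X : Type u} (f : Finset X → Set X) (y : Set X) : ℕ → Set X
  | 0 => y
  | n+1 => closeSeq f y n ∪ ⋃ s ∈ {s : Finset X | ↑s ⊆ closeSeq f y n}, f s

end MenasHelpers

/-- Menas' characterization: a set `C ⊆ [X]^{<μ}` contains a club subset of `[X]^{<μ}`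
iff there is `f : [X]^{<ω} → [X]^{<μ}` such that every `x ∈ [X]^{<μ}` closed under `f`
belongs to `C`. -/
theorem contains_club_iff_exists_fn {X : Type u} (μ : Cardinal.{u})
    (hreg : μ.IsRegular) (hunc : ℵ₀ < μ) (hX : μ ≤ #X)
    (C : Set (Set X)) (hC : ∀ x ∈ C, #x < μ) :
    (∃ D : Set (Set X), IsClubSet μ D ∧ D ⊆ C) ↔
      ∃ f : Finset X → Set X, (∀ s, #(f s) < μ) ∧
        ∀ x : Set X, #x < μ → ClosedUnderF f x → x ∈ C := by
  classical
  constructor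
  · rintro ⟨D, ⟨hD1, hD2, hD3⟩, hDC⟩
    set g : Set X → Set X := fun y => if h : #y < μ then (hD2 y h).choose else ∅ with hgdef
    have hg : ∀ y : Set X, #y < μ → g y ∈ D ∧ y ⊆ g y := by
      intro y h
      rw [hgdef]; simp only [dif_pos h]
      exact ⟨(hD2 y h).choose_spec.1, (hD2 y h).choose_spec.2⟩
    set H := iterClose g with hH
    have hmem : ∀ n (s : Finset X), H n s ∈ D := by
      intro n
      induction n with
      | zero => intro s; exact (hg _ ((s.finite_toSet).lt_aleph0.trans hunc)).1
      | succ n IHn =>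
        intro s
        have hsm : #(⋃ t ∈ (s.powerset : Finset (Finset X)), H n t) < μ := by
          rw [← Finset.set_biUnion_coe]
          exact menas_small_biUnion hreg _
            ((s.powerset.finite_toSet).lt_aleph0.trans hunc)
            (fun t _ => hD1 _ (IHn t))
        exact (hg _ hsm).1
    have hsmall : ∀ n (s : Finset X), #(H n s) < μ := fun n s => hD1 _ (hmem n s)
    have hUsmall : ∀ n (s : Finset X),
        #(⋃ t ∈ (s.powerset : Finset (Finset X)), H n t) < μ := by
      intro n s
      rw [← Finset.set_biUnion_coe]
      exact menas_small_biUnion hreg _ ((s.powerset.finite_toSet).lt_aleph0.trans hunc)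
        (fun t _ => hsmall n t)
    have hstep : ∀ n (s t : Finset X), t ⊆ s → H n t ⊆ H (n+1) s := by
      intro n s t hts
      have h1 : H n t ⊆ ⋃ t ∈ (s.powerset : Finset (Finset X)), H n t :=
        Set.subset_biUnion_of_mem (u := fun t => H n t) (Finset.mem_powerset.2 hts)
      exact h1.trans (hg _ (hUsmall n s)).2
    have hgrow : ∀ n (s : Finset X), ↑s ⊆ H n s := by
      intro n
      induction n with
      | zero => intro s; exact (hg _ ((s.finite_toSet).lt_aleph0.trans hunc)).2
      | succ n IHn => intro s; exact (IHn s).trans (hstep n s s subset_rfl)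
    have hmonoN : ∀ (s : Finset X) (m n : ℕ), m ≤ n → H m s ⊆ H n s := by
      intro s m n hmn
      induction n, hmn using Nat.le_induction with
      | base => exact subset_rfl
      | succ n hmn IH => exact IH.trans (hstep n s s subset_rfl)
    have hFD : ∀ s : Finset X, (⋃ n : ℕ, H n s) ∈ D := by
      intro s
      set c : Ordinal.{u} → Set X :=
        fun β => ⋃ (n : ℕ), ⋃ (_ : (n : Ordinal.{u}) ≤ β), H n s with hc
      have hcn : ∀ n : ℕ, c (n : Ordinal.{u}) = H n s := by
        intro n
        apply subset_antisymm
        · exact iUnion₂_subset fun m hm => hmonoN s m n (by exact_mod_cast hm)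
        · intro a ha; exact mem_iUnion₂.2 ⟨n, le_rfl, ha⟩
      have hcmem : ∀ β < Ordinal.omega0.{u}, c β ∈ D := by
        intro β hβ
        obtain ⟨n, rfl⟩ := Ordinal.lt_omega0.1 hβ
        rw [hcn n]; exact hmem n s
      have hcmono : ∀ β γ, β ≤ γ → γ < Ordinal.omega0.{u} → c β ⊆ c γ := fun β γ h _ =>
        iUnion₂_subset fun n hn a ha => mem_iUnion₂.2 ⟨n, hn.trans h, ha⟩
      have h := hD3 Ordinal.omega0 c Ordinal.omega0_ne_zero
        (by rw [Ordinal.card_omega0]; exact hunc) hcmem hcmono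
      have heq : (⋃ β ∈ Set.Iio Ordinal.omega0.{u}, c β) = ⋃ n : ℕ, H n s := by
        apply subset_antisymm
        · exact iUnion₂_subset fun β _ => iUnion₂_subset fun n _ =>
            subset_iUnion (fun n => H n s) n
        · intro a ha
          obtain ⟨n, hn⟩ := mem_iUnion.1 ha
          have han : a ∈ c (n : Ordinal.{u}) := (hcn n).symm ▸ hn
          exact Set.mem_biUnion (Set.mem_Iio.2 (Ordinal.nat_lt_omega0 n)) han
      rwa [heq] at h
    refine ⟨fun s => ⋃ n : ℕ, H n s, fun s => hD1 _ (hFD s), ?_⟩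
    intro x hx hcl
    have hFmono : ∀ s t : Finset X, s ⊆ t → (⋃ n : ℕ, H n s) ⊆ ⋃ n : ℕ, H n t := by
      intro s t hst
      exact iUnion_subset fun n =>
        (hstep n t s hst).trans (subset_iUnion (fun n => H n t) (n+1))
    have hxeq : x = ⋃ s ∈ {s : Finset X | ↑s ⊆ x}, (⋃ n : ℕ, H n s) := by
      apply subset_antisymm
      · intro a ha
        refine Set.mem_biUnion (show ↑({a} : Finset X) ⊆ x by simpa using ha) ?_
        exact mem_iUnion.2 ⟨0, hgrow 0 {a} (by simp)⟩
      · exact iUnion₂_subset fun s hs => hcl s hs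
    refine hDC ?_
    rw [hxeq]
    exact menas_union_finsets_mem hreg hD3 _ hFmono x hx (fun s _ => hFD s)
  · rintro ⟨f, hf1, hf2⟩
    set D : Set (Set X) := {x | #x < μ ∧ ClosedUnderF f x} with hD
    refine ⟨D, ⟨fun c hc => hc.1, ?_, ?_⟩, fun x hx => hf2 x hx.1 hx.2⟩
    · intro y hy
      set z := closeSeq f y with hz
      have hzsucc : ∀ n, z (n+1) = z n ∪ ⋃ s ∈ {s : Finset X | ↑s ⊆ z n}, f s :=
        fun n => rfl
      have hzmono1 : ∀ n, z n ⊆ z (n+1) := by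
        intro n; rw [hzsucc n]; exact subset_union_left
      have hzmono : ∀ m n : ℕ, m ≤ n → z m ⊆ z n := by
        intro m n hmn
        induction n, hmn using Nat.le_induction with
        | base => exact subset_rfl
        | succ n hmn IH => exact IH.trans (hzmono1 n)
      have hzsmall : ∀ n, #(z n) < μ := by
        intro n
        induction n with
        | zero => exact hy
        | succ n IHn =>
          rw [hzsucc n]
          refine lt_of_le_of_lt (Cardinal.mk_union_le _ _) ?_
          refine Cardinal.add_lt_of_lt hreg.aleph0_le IHn ?_
          exact menas_small_biUnion hreg _ (menas_mk_finsetSubtype_lt hunc IHn)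
            fun s _ => hf1 s
      set w := ⋃ n : ℕ, z n with hw
      have hwsmall : #w < μ := by
        have hweq : w = ⋃ i : ULift.{u} ℕ, z i.down := by
          apply subset_antisymm
          · exact iUnion_subset fun n => subset_iUnion (fun i : ULift.{u} ℕ => z i.down) ⟨n⟩
          · exact iUnion_subset fun i => subset_iUnion z i.down
        rw [hweq]
        refine menas_small_iUnion hreg _ ?_ fun i => hzsmall i.down
        have : #(ULift.{u} ℕ) = ℵ₀ := by simp
        rw [this]; exact hunc
      have hwclosed : ClosedUnderF f w := by
        intro s hs
        have hex : ∀ a ∈ s, ∃ n : ℕ, a ∈ z n := by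
          intro a ha
          simpa [hw, mem_iUnion] using hs ha
        set ν : X → ℕ := fun a => if h : ∃ n, a ∈ z n then h.choose else 0 with hν
        have hsn : ↑s ⊆ z (s.sup ν) := by
          intro a ha
          have h := hex a ha
          have hmem : a ∈ z (ν a) := by rw [hν]; simp only [dif_pos h]; exact h.choose_spec
          exact hzmono _ _ (Finset.le_sup (f := ν) ha) hmem
        have hstep : f s ⊆ z (s.sup ν + 1) := by
          rw [hzsucc]
          exact (Set.subset_biUnion_of_mem (u := f) hsn).trans subset_union_right
        exact hstep.trans (subset_iUnion z _)
      exact ⟨w, ⟨hwsmall, hwclosed⟩, subset_iUnion z 0⟩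
    · intro δ c hδ0 hδμ hcD hcmono
      refine ⟨?_, ?_⟩
      · have heq : (⋃ β ∈ Set.Iio δ, c β)
            = ⋃ i : δ.ToType, c ((Ordinal.ToType.mk (o := δ)).symm i).1 := by
          apply subset_antisymm
          · intro a ha
            obtain ⟨β, hβ, haβ⟩ := mem_iUnion₂.1 ha
            refine mem_iUnion.2 ⟨(Ordinal.ToType.mk (o := δ)) ⟨β, hβ⟩, ?_⟩
            have hval : ((Ordinal.ToType.mk (o := δ)).symm
                ((Ordinal.ToType.mk (o := δ)) ⟨β, hβ⟩)).1 = β := by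
              rw [OrderIso.symm_apply_apply]
            rwa [hval]
          · refine iUnion_subset fun i => ?_
            exact Set.subset_biUnion_of_mem (u := c) ((Ordinal.ToType.mk (o := δ)).symm i).2
        rw [heq]
        refine menas_small_iUnion hreg _ ?_
          fun i => (hcD _ (Set.mem_Iio.1 ((Ordinal.ToType.mk (o := δ)).symm i).2)).1
        rw [Cardinal.mk_toType]; exact hδμ
      · intro s hs
        set ρ : X → Ordinal.{u} :=
          fun a => if h : ∃ β, β < δ ∧ a ∈ c β then h.choose else 0 with hρ
        have hρspec : ∀ a ∈ s, ρ a < δ ∧ a ∈ c (ρ a) := by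
          intro a ha
          have h := hs ha
          simp only [mem_iUnion, Set.mem_Iio, exists_prop] at h
          rw [hρ]; simp only [dif_pos h]
          exact h.choose_spec
        have hβδ : s.sup ρ < δ := by
          rw [Finset.sup_lt_iff (pos_iff_ne_zero.2 hδ0)]
          exact fun a ha => (hρspec a ha).1
        have hsc : ↑s ⊆ c (s.sup ρ) := fun a ha =>
          hcmono _ _ (Finset.le_sup (f := ρ) ha) hβδ (hρspec a ha).2
        have hfs : f s ⊆ c (s.sup ρ) := (hcD _ hβδ).2 s hsc
        exact hfs.trans (Set.subset_biUnion_of_mem (u := c) (Set.mem_Iio.2 hβδ))
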